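/- Let n ≥ 2 and ε, φ ∈ ℝ with εφ = 1, ε > 0, φ > 0, and ε ≠ 1. Then the n (pairwise distinct) eigenvalues of T_{n,ε,φ} are exactly ε + ε^{-1} together with 2 cos(kπ/n) for k = 1, …, n − 1. Moreover: (i) the vector v with entries v_i = ε^{-(i-1)}, i = 1, …, n, satisfies T_{n,ε,φ} v = (ε + ε^{-1}) v; and (ii) for each k = 1, …, n − 1, the vector v^{(k)} with entries v^{(k)}_i = sin(i kπ/n) − ε sin((i−1) kπ/n), i = 1, …, n, is nonzero and satisfies T_{n,ε,φ} v^{(k)} = 2 cos(kπ/n) v^{(k)}. -/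

import Mathlib

open Matrix Real Filter

/-- The n×n tridiagonal matrix `T_{n,ε,φ}` with `(T)_{11} = ε`, `(T)_{nn} = φ`,
zero elsewhere on the diagonal, and ones on the first super- and subdiagonals. -/
noncomputable def Ttri (n : ℕ) (e f : ℝ) : Matrix (Fin n) (Fin n) ℝ :=
  fun i j =>
    if i = j then (if (i : ℕ) = 0 then e else if (i : ℕ) = n - 1 then f else 0)
    else if (i : ℕ) + 1 = (j : ℕ) ∨ (j : ℕ) + 1 = (i : ℕ) then 1 else 0


/-- `x` is an eigenvalue of `T_{n,ε,φ}`. -/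
def HasEigen (n : ℕ) (e f x : ℝ) : Prop :=
  ∃ v : Fin n → ℝ, v ≠ 0 ∧ (Ttri n e f).mulVec v = x • v

/-- The candidate list of eigenvalues in the case `εφ = 1`:
`ε + ε⁻¹` (for k = 0) together with `2 cos(kπ/n)` for `k = 1, …, n-1`. -/
noncomputable def eigList (n : ℕ) (e : ℝ) : Fin n → ℝ :=
  fun k => if (k : ℕ) = 0 then e + e⁻¹ else 2 * Real.cos ((k : ℕ) * π / n)

lemma Ttri_apply_eq (n : ℕ) (e f : ℝ) (i j : Fin n) :
    Ttri n e f i j =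
      (if j = i then (if (i : ℕ) = 0 then e else if (i : ℕ) = n - 1 then f else 0) else 0)
      + (if (j : ℕ) = (i : ℕ) + 1 then 1 else 0)
      + (if (j : ℕ) + 1 = (i : ℕ) then 1 else 0) := by
  simp only [Ttri, Fin.ext_iff]
  split_ifs <;> first | omega | ring1

lemma sum_ite_coe {n c : ℕ} (v : Fin n → ℝ) (h : c < n) :
    (∑ j : Fin n, if (j : ℕ) = c then v j else 0) = v ⟨c, h⟩ := by
  rw [Finset.sum_eq_single ⟨c, h⟩]
  · simp
  · intro j _ hj
    rw [if_neg]
    simpa [Fin.ext_iff] using hj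
  · simp

lemma sum_ite_coe_zero {n c : ℕ} (v : Fin n → ℝ) (h : ¬ c < n) :
    (∑ j : Fin n, if (j : ℕ) = c then v j else 0) = 0 := by
  apply Finset.sum_eq_zero
  intro j _
  rw [if_neg]
  have := j.isLt
  omega

lemma Ttri_mulVec (n : ℕ) (e f : ℝ) (v : Fin n → ℝ) (i : Fin n) :
    (Ttri n e f).mulVec v i =
      (if (i : ℕ) = 0 then e else if (i : ℕ) = n - 1 then f else 0) * v i
      + (∑ j : Fin n, if (j : ℕ) = (i : ℕ) + 1 then v j else 0)
      + (∑ j : Fin n, if (j : ℕ) = (i : ℕ) - 1 ∧ (i : ℕ) ≠ 0 then v j else 0) := by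
  simp only [Matrix.mulVec, dotProduct, Ttri_apply_eq, add_mul, ite_mul, one_mul,
    zero_mul, Finset.sum_add_distrib, Finset.sum_ite_eq' Finset.univ i]
  simp only [Finset.mem_univ, if_true]
  congr 1
  apply Finset.sum_congr rfl
  intro j _
  congr 1
  simp only [eq_iff_iff]
  have := j.isLt
  have := i.isLt
  omega

lemma Ttri_mulVec_zero {n : ℕ} (hn : 2 ≤ n) (e f : ℝ) (v : Fin n → ℝ) (i : Fin n)
    (h0 : (i : ℕ) = 0) :
    (Ttri n e f).mulVec v i = e * v i + v ⟨1, by omega⟩ := by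
  rw [Ttri_mulVec, if_pos h0, sum_ite_coe v (by omega : (i:ℕ)+1 < n)]
  rw [show (∑ j : Fin n, if (j : ℕ) = (i : ℕ) - 1 ∧ (i : ℕ) ≠ 0 then v j else 0) = 0 from
    Finset.sum_eq_zero fun j _ => by rw [if_neg]; omega]
  simp only [h0]
  norm_num

lemma Ttri_mulVec_last {n : ℕ} (hn : 2 ≤ n) (e f : ℝ) (v : Fin n → ℝ) (i : Fin n)
    (hl : (i : ℕ) = n - 1) :
    (Ttri n e f).mulVec v i = v ⟨n - 2, by omega⟩ + f * v i := by
  have h0 : (i : ℕ) ≠ 0 := by omega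
  rw [Ttri_mulVec, if_neg h0, if_pos hl, sum_ite_coe_zero v (by omega)]
  rw [show (∑ j : Fin n, if (j : ℕ) = (i : ℕ) - 1 ∧ (i : ℕ) ≠ 0 then v j else 0)
      = v ⟨n-2, by omega⟩ by
    rw [← sum_ite_coe v (by omega : n - 2 < n)]
    apply Finset.sum_congr rfl
    intro j _
    congr 1
    simp only [eq_iff_iff]
    omega]
  ring

lemma Ttri_mulVec_mid {n : ℕ} (e f : ℝ) (v : Fin n → ℝ) (i : Fin n)
    (h0 : (i : ℕ) ≠ 0) (hl : (i : ℕ) ≠ n - 1) :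
    (Ttri n e f).mulVec v i = v ⟨(i:ℕ) - 1, by omega⟩ + v ⟨(i:ℕ) + 1, by have := i.isLt; omega⟩ := by
  have := i.isLt
  rw [Ttri_mulVec, if_neg h0, if_neg hl, sum_ite_coe v (by omega)]
  rw [show (∑ j : Fin n, if (j : ℕ) = (i : ℕ) - 1 ∧ (i : ℕ) ≠ 0 then v j else 0)
      = v ⟨(i:ℕ)-1, by omega⟩ by
    rw [← sum_ite_coe v (by omega : (i:ℕ) - 1 < n)]
    apply Finset.sum_congr rfl
    intro j _
    congr 1
    simp only [eq_iff_iff]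
    omega]
  ring


lemma key_sin (a t : ℝ) : Real.sin (a - t) + Real.sin (a + t) = 2 * Real.cos t * Real.sin a := by
  rw [Real.sin_sub, Real.sin_add]; ring

lemma outlier_eigen {n : ℕ} (hn : 2 ≤ n) (e f : ℝ) (hef : e * f = 1) (he : 0 < e) :
    (Ttri n e f).mulVec (fun i : Fin n => e⁻¹ ^ (i : ℕ)) =
      (e + e⁻¹) • ((fun i : Fin n => e⁻¹ ^ (i : ℕ)) : Fin n → ℝ) := by
  have he0 : e ≠ 0 := ne_of_gt he
  have hfe : f = e⁻¹ := by field_simp at hef ⊢; linarith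
  subst hfe
  funext i
  simp only [Pi.smul_apply, smul_eq_mul]
  by_cases h0 : (i:ℕ) = 0
  · rw [Ttri_mulVec_zero hn e e⁻¹ _ i h0]
    simp [h0]
  · by_cases hl : (i:ℕ) = n - 1
    · rw [Ttri_mulVec_last hn e e⁻¹ _ i hl]
      obtain ⟨m, rfl⟩ : ∃ m, n = m + 2 := ⟨n - 2, by omega⟩
      simp only [hl, show m + 2 - 2 = m from rfl, show m + 2 - 1 = m + 1 from rfl, pow_succ]
      field_simp
    · rw [Ttri_mulVec_mid e e⁻¹ _ i h0 hl]
      obtain ⟨m, hm⟩ : ∃ m, (i:ℕ) = m + 1 := ⟨(i:ℕ) - 1, by omega⟩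
      simp only [hm, Nat.add_sub_cancel, pow_succ]
      field_simp

lemma sin_eigen {n : ℕ} (hn : 2 ≤ n) (e f : ℝ) (hef : e * f = 1)
    (k : ℕ) (hk1 : 1 ≤ k) (hk2 : k ≤ n - 1) :
    (Ttri n e f).mulVec
        (fun i : Fin n =>
          Real.sin (((i : ℕ) + 1 : ℝ) * (k * π / n)) -
            e * Real.sin ((i : ℕ) * (k * π / n))) =
      (2 * Real.cos (k * π / n)) •
        ((fun i : Fin n =>
          Real.sin (((i : ℕ) + 1 : ℝ) * (k * π / n)) -
            e * Real.sin ((i : ℕ) * (k * π / n))) : Fin n → ℝ) := by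
  set θ : ℝ := (k : ℝ) * π / n with hθ
  funext i
  simp only [Pi.smul_apply, smul_eq_mul]
  by_cases h0 : (i:ℕ) = 0
  · rw [Ttri_mulVec_zero hn e f _ i h0]
    simp only [h0]
    have hz0 : Real.sin ((0:ℝ) * θ) = 0 := by simp
    have D : Real.sin (2 * θ) = 2 * Real.sin θ * Real.cos θ := Real.sin_two_mul θ
    push_cast
    linear_combination (norm := ring_nf) D + (2 * Real.cos θ * e - e^2) * hz0
  · by_cases hl : (i:ℕ) = n - 1
    · rw [Ttri_mulVec_last hn e f _ i hl]
      obtain ⟨m, rfl⟩ : ∃ m, n = m + 2 := ⟨n - 2, by omega⟩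
      have hz : Real.sin (((m:ℝ) + 2) * θ) = 0 := by
        rw [show ((m:ℝ) + 2) * θ = (k : ℝ) * π by
          rw [hθ]; push_cast; field_simp]
        exact Real.sin_nat_mul_pi k
      have B := key_sin (((m:ℝ) + 1) * θ) θ
      rw [show ((m:ℝ)+1)*θ - θ = (m:ℝ)*θ by ring,
          show ((m:ℝ)+1)*θ + θ = ((m:ℝ)+2)*θ by ring] at B
      simp only [hl, show m + 2 - 2 = m from rfl, show m + 2 - 1 = m + 1 from rfl]
      push_cast
      linear_combination (norm := ring_nf) (-e) * B +
        (-(Real.sin (((m:ℝ)+1) * θ))) * hef + (f - 2 * Real.cos θ + e) * hz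
    · rw [Ttri_mulVec_mid e f _ i h0 hl]
      obtain ⟨m, hm⟩ : ∃ m, (i:ℕ) = m + 1 := ⟨(i:ℕ) - 1, by omega⟩
      have A := key_sin (((m:ℝ) + 2) * θ) θ
      rw [show ((m:ℝ)+2)*θ - θ = ((m:ℝ)+1)*θ by ring,
          show ((m:ℝ)+2)*θ + θ = ((m:ℝ)+3)*θ by ring] at A
      have B := key_sin (((m:ℝ) + 1) * θ) θ
      rw [show ((m:ℝ)+1)*θ - θ = (m:ℝ)*θ by ring,
          show ((m:ℝ)+1)*θ + θ = ((m:ℝ)+2)*θ by ring] at B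
      simp only [hm, Nat.add_sub_cancel]
      push_cast
      linear_combination (norm := ring_nf) A - e * B

lemma two_lt_add_inv {e : ℝ} (he : 0 < e) (hne : e ≠ 1) : 2 < e + e⁻¹ := by
  have h1 : 0 < (e - 1) ^ 2 :=
    (sq_nonneg (e - 1)).lt_of_ne (Ne.symm (pow_ne_zero 2 (sub_ne_zero.2 hne)))
  have h : e + e⁻¹ - 2 = (e - 1) ^ 2 / e := by field_simp; ring
  have := div_pos h1 he
  linarith

lemma eigList_inj {n : ℕ} (hn : 2 ≤ n) {e : ℝ} (he : 0 < e) (hne : e ≠ 1) :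
    Function.Injective (eigList n e) := by
  have hn0 : (0:ℝ) < n := by exact_mod_cast Nat.pos_of_ne_zero (by omega)
  have h2 := two_lt_add_inv he hne
  have mem : ∀ a : Fin n, ((a:ℕ):ℝ) * π / n ∈ Set.Icc 0 π := by
    intro a
    constructor
    · positivity
    · rw [div_le_iff₀ hn0]
      have ha : ((a:ℕ):ℝ) ≤ (n:ℝ) := by exact_mod_cast le_of_lt a.isLt
      nlinarith [Real.pi_pos]
  have cosle : ∀ a : Fin n, 2 * Real.cos (((a:ℕ):ℝ) * π / n) ≤ 2 := by
    intro a; have := Real.cos_le_one (((a:ℕ):ℝ) * π / n); linarith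
  intro a b hab
  unfold eigList at hab
  by_cases ha : (a:ℕ) = 0 <;> by_cases hb : (b:ℕ) = 0
  · exact Fin.val_injective (by omega)
  · exfalso; rw [if_pos ha, if_neg hb] at hab
    have := cosle b; linarith
  · exfalso; rw [if_neg ha, if_pos hb] at hab
    have := cosle a; linarith
  · rw [if_neg ha, if_neg hb] at hab
    have h3 : Real.cos (((a:ℕ):ℝ) * π / n) = Real.cos (((b:ℕ):ℝ) * π / n) := by linarith
    have h4 := Real.injOn_cos (mem a) (mem b) h3
    have h5 : ((a:ℕ):ℝ) = ((b:ℕ):ℝ) := by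
      field_simp at h4
      exact_mod_cast h4
    exact Fin.val_injective (by exact_mod_cast h5)

theorem stmt17 (n : ℕ) (hn : 2 ≤ n) (e f : ℝ)
    (hef : e * f = 1) (he : 0 < e) (hf : 0 < f) (hne : e ≠ 1) :
    -- the n eigenvalues are pairwise distinct and are exactly the listed values
    Function.Injective (eigList n e) ∧
    (∀ x : ℝ, HasEigen n e f x ↔ ∃ k : Fin n, x = eigList n e k) ∧
    -- (i) the outlier eigenvector
    (Ttri n e f).mulVec (fun i : Fin n => e⁻¹ ^ (i : ℕ)) =
      (e + e⁻¹) • ((fun i : Fin n => e⁻¹ ^ (i : ℕ)) : Fin n → ℝ) ∧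
    -- (ii) the eigenvectors for the eigenvalues 2 cos(kπ/n), k = 1, …, n-1
    (∀ k : ℕ, 1 ≤ k → k ≤ n - 1 →
      ((fun i : Fin n =>
          Real.sin (((i : ℕ) + 1 : ℝ) * (k * π / n)) -
            e * Real.sin ((i : ℕ) * (k * π / n))) : Fin n → ℝ) ≠ 0 ∧
      (Ttri n e f).mulVec
          (fun i : Fin n =>
            Real.sin (((i : ℕ) + 1 : ℝ) * (k * π / n)) -
              e * Real.sin ((i : ℕ) * (k * π / n))) =
        (2 * Real.cos (k * π / n)) •
          ((fun i : Fin n =>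
            Real.sin (((i : ℕ) + 1 : ℝ) * (k * π / n)) -
              e * Real.sin ((i : ℕ) * (k * π / n))) : Fin n → ℝ)) := by
  classical
  have he0 : e ≠ 0 := ne_of_gt he
  have hinj := eigList_inj hn he hne
  have hout := outlier_eigen hn e f hef he
  have hsvec : ∀ k : ℕ, 1 ≤ k → k ≤ n - 1 →
      ((fun i : Fin n =>
          Real.sin (((i : ℕ) + 1 : ℝ) * (k * π / n)) -
            e * Real.sin ((i : ℕ) * (k * π / n))) : Fin n → ℝ) ≠ 0 := by
    intro k hk1 hk2 h
    have h0n : 0 < n := by omega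
    have h1 := congrFun h ⟨0, h0n⟩
    simp only [Pi.zero_apply] at h1
    norm_num at h1
    have hkR : (1:ℝ) ≤ (k:ℝ) := by exact_mod_cast hk1
    have hknR : (k:ℝ) < (n:ℝ) := by exact_mod_cast (by omega : k < n)
    have hnR : (0:ℝ) < (n:ℝ) := by exact_mod_cast h0n
    have hs : 0 < Real.sin ((k:ℝ) * π / n) := by
      apply Real.sin_pos_of_pos_of_lt_pi
      · have := Real.pi_pos; positivity
      · rw [div_lt_iff₀ hnR]
        nlinarith [Real.pi_pos]
    rw [h1] at hs
    exact lt_irrefl 0 hs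
  have houtne : ((fun i : Fin n => e⁻¹ ^ (i : ℕ)) : Fin n → ℝ) ≠ 0 := by
    intro h
    have := congrFun h ⟨0, by omega⟩
    simp at this
  refine ⟨hinj, ?_, hout, fun k hk1 hk2 => ⟨hsvec k hk1 hk2, sin_eigen hn e f hef k hk1 hk2⟩⟩
  intro x
  constructor
  · rintro ⟨v, hv0, hv⟩
    by_contra hx
    push_neg at hx
    set T := Matrix.mulVecLin (Ttri n e f) with hT
    set w : Option (Fin n) → (Fin n → ℝ) := fun o =>
      Option.elim o v (fun j => if (j:ℕ) = 0 then (fun i => e⁻¹ ^ (i:ℕ)) else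
        (fun i : Fin n =>
          Real.sin (((i : ℕ) + 1 : ℝ) * ((j:ℕ) * π / n)) -
            e * Real.sin ((i : ℕ) * ((j:ℕ) * π / n)))) with hw
    set μ : Option (Fin n) → ℝ := fun o => Option.elim o x (eigList n e) with hμ
    have hμinj : Function.Injective μ := by
      intro a b hab
      match a, b with
      | none, none => rfl
      | none, some b => exact absurd hab (hx b)
      | some a, none => exact absurd hab.symm (hx a)
      | some a, some b => exact congrArg some (hinj hab)
    have heig : ∀ o, Module.End.HasEigenvector T (μ o) (w o) := by
      intro o
      match o with
      | none =>
        refine ⟨Module.End.mem_eigenspace_iff.2 ?_, hv0⟩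
        simpa [hT, hw, hμ, Matrix.mulVecLin_apply] using hv
      | some j =>
        by_cases hj : (j:ℕ) = 0
        · refine ⟨Module.End.mem_eigenspace_iff.2 ?_, ?_⟩
          · simp only [hw, hμ, Option.elim, if_pos hj]
            rw [show eigList n e j = e + e⁻¹ by simp [eigList, hj]]
            simpa [hT, Matrix.mulVecLin_apply] using hout
          · simp only [hw, Option.elim, if_pos hj]; exact houtne
        · have hk1 : 1 ≤ (j:ℕ) := by omega
          have hk2 : (j:ℕ) ≤ n - 1 := by have := j.isLt; omega
          refine ⟨Module.End.mem_eigenspace_iff.2 ?_, ?_⟩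
          · simp only [hw, hμ, Option.elim, if_neg hj]
            rw [show eigList n e j = 2 * Real.cos ((j:ℕ) * π / n) by simp [eigList, hj]]
            simpa [hT, Matrix.mulVecLin_apply] using sin_eigen hn e f hef (j:ℕ) hk1 hk2
          · simp only [hw, Option.elim, if_neg hj]; exact hsvec (j:ℕ) hk1 hk2
    have hli := Module.End.eigenvectors_linearIndependent' T μ hμinj w heig
    have hcard := hli.fintype_card_le_finrank
    rw [Module.finrank_fin_fun] at hcard
    simp only [Fintype.card_option, Fintype.card_fin] at hcard
    omega
  · rintro ⟨j, rfl⟩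
    by_cases hj : (j:ℕ) = 0
    · refine ⟨fun i : Fin n => e⁻¹ ^ (i:ℕ), houtne, ?_⟩
      rw [show eigList n e j = e + e⁻¹ by simp [eigList, hj]]
      exact hout
    · have hk1 : 1 ≤ (j:ℕ) := by omega
      have hk2 : (j:ℕ) ≤ n - 1 := by have := j.isLt; omega
      refine ⟨_, hsvec (j:ℕ) hk1 hk2, ?_⟩
      rw [show eigList n e j = 2 * Real.cos ((j:ℕ) * π / n) by simp [eigList, hj]]
      exact sin_eigen hn e f hef (j:ℕ) hk1 hk2
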